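/- Let ε and p be reals with 0 < ε < p² ≤ 1 and set δ = √ε/p (so 0 < δ < 1), c = 1/((1−δ)p), k = 1/√ε − c, and t = log((1−δ)p)/log(1−(1−δ)p). Suppose k and t are positive integers. Then there exists n₀ = n₀(ε,p) such that for every real n > n₀: ∑_{i=0}^{k−1} [ log Γ((1−δ)p·n(1−i√ε) + 1) − log Γ((1−δ)p·n(1−i√ε) − √ε·n + 1) ] + ∑_{i=0}^{t−1} log Γ((1−δ)p·c·√ε·n·(1−(1−δ)p)^i + 1) ≥ (1−3√ε)·n·log(pn). -/

import Mathlib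

open Finset

/-- Let `0 < ε < p² ≤ 1` (with `p > 0`), `δ = √ε/p`, `c = 1/((1-δ)p)`,
and suppose `k = 1/√ε - c` and `t = log((1-δ)p)/log(1-(1-δ)p)` are positive integers. Then for
all sufficiently large real `n`,
`∑_{i=0}^{k-1} [log Γ((1-δ)p·n(1-i√ε)+1) - log Γ((1-δ)p·n(1-i√ε)-√ε·n+1)]
  + ∑_{i=0}^{t-1} log Γ((1-δ)p·c·√ε·n·(1-(1-δ)p)^i + 1) ≥ (1-3√ε)·n·log(pn)`. -/


lemma logGamma_slope (a b : ℝ) (hb : 0 < b) (hba : b ≤ a) :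
    (a - b) * Real.log b ≤ Real.log (Real.Gamma (a + 1)) - Real.log (Real.Gamma (b + 1)) := by
  rcases eq_or_lt_of_le hba with h | h
  · subst h; simp
  · have hconv := Real.convexOn_log_Gamma
    have h1 : b ∈ Set.Ioi (0:ℝ) := hb
    have h2 : a + 1 ∈ Set.Ioi (0:ℝ) := by simp; linarith
    have hs := hconv.slope_mono_adjacent h1 h2 (by linarith : b < b + 1) (by linarith : b + 1 < a + 1)
    simp only [Function.comp_apply] at hs
    have hgb : Real.Gamma (b + 1) = b * Real.Gamma b := Real.Gamma_add_one hb.ne'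
    have hlog : Real.log (Real.Gamma (b + 1)) - Real.log (Real.Gamma b) = Real.log b := by
      rw [hgb, Real.log_mul hb.ne' (Real.Gamma_pos_of_pos hb).ne']; ring
    have h3 : (b + 1) - b = 1 := by ring
    rw [h3, div_one, hlog] at hs
    have h4 : (0:ℝ) < a + 1 - (b + 1) := by linarith
    rw [le_div_iff₀ h4] at hs
    nlinarith

lemma logGamma_two_le {y : ℝ} (hy : 2 ≤ y) : 0 ≤ Real.log (Real.Gamma y) := by
  have := logGamma_slope (y - 1) 1 one_pos (by linarith)
  simp only [Real.log_one, mul_zero, sub_add_cancel] at this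
  have h2 : Real.Gamma (1 + 1 : ℝ) = 1 := by
    rw [Real.Gamma_add_one one_ne_zero, Real.Gamma_one]; norm_num
  rw [h2] at this
  simpa using this

lemma logGamma_stirling_aux (m : ℕ) : ∀ x : ℝ, 1 ≤ x → x ≤ m + 1 →
    x * Real.log x - x ≤ Real.log (Real.Gamma (x + 1)) := by
  induction m with
  | zero =>
    intro x h1 h2
    norm_num at h2
    have hx : x = 1 := le_antisymm h2 h1
    subst hx
    have h2 : Real.Gamma (1 + 1 : ℝ) = 1 := by
      rw [Real.Gamma_add_one one_ne_zero, Real.Gamma_one]; norm_num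
    rw [h2]; simp
  | succ m ih =>
    intro x h1 h2
    rcases le_or_gt x 2 with hx2 | hx2
    · have hlogx : Real.log x ≤ 1 := by
        calc Real.log x ≤ Real.log 2 := Real.log_le_log (by linarith) hx2
        _ ≤ 1 := by
          rw [← Real.log_exp 1]
          exact Real.log_le_log (by norm_num) (by nlinarith [Real.add_one_le_exp (1:ℝ)])
      have h0 : 0 ≤ Real.log (Real.Gamma (x + 1)) := logGamma_two_le (by linarith)
      nlinarith [Real.log_nonneg h1]
    · have hx1 : 1 ≤ x - 1 := by linarith
      have hxm : x - 1 ≤ m + 1 := by push_cast at h2 ⊢; linarith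
      have key := ih (x - 1) hx1 hxm
      rw [sub_add_cancel] at key
      have hg : Real.Gamma (x + 1) = x * Real.Gamma x := Real.Gamma_add_one (by linarith)
      have hgpos : 0 < Real.Gamma x := Real.Gamma_pos_of_pos (by linarith)
      rw [hg, Real.log_mul (by linarith) hgpos.ne']
      -- need x log x - x ≤ log x + log Γ x, with log Γ x ≥ (x-1) log (x-1) - (x-1)
      have hratio : Real.log x - Real.log (x - 1) ≤ 1 / (x - 1) := by
        have hpos : (0:ℝ) < x - 1 := by linarith
        have := Real.log_le_sub_one_of_pos (show (0:ℝ) < x / (x - 1) by positivity)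
        rw [Real.log_div (by linarith) hpos.ne'] at this
        have : Real.log x - Real.log (x-1) ≤ x / (x-1) - 1 := this
        have heq : x / (x - 1) - 1 = 1 / (x - 1) := by field_simp; ring
        linarith [heq ▸ this]
      have hpos : (0:ℝ) < x - 1 := by linarith
      have : (x - 1) * (Real.log x - Real.log (x - 1)) ≤ 1 := by
        calc (x - 1) * (Real.log x - Real.log (x - 1)) ≤ (x - 1) * (1 / (x - 1)) := by
              apply mul_le_mul_of_nonneg_left hratio (by linarith)
        _ = 1 := by field_simp
      nlinarith

lemma logGamma_stirling {x : ℝ} (h1 : 1 ≤ x) :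
    x * Real.log x - x ≤ Real.log (Real.Gamma (x + 1)) := by
  exact logGamma_stirling_aux ⌈x⌉₊ x h1 (le_trans (Nat.le_ceil x) (by push_cast; linarith))

set_option maxHeartbeats 1000000 in
theorem near_perfect_matching_count_computation
    (ε p : ℝ) (hε : 0 < ε) (hεp : ε < p ^ 2) (hp1 : p ^ 2 ≤ 1) (hp : 0 < p)
    (δ c : ℝ) (hδ : δ = Real.sqrt ε / p) (hc : c = 1 / ((1 - δ) * p))
    (k t : ℕ) (hkpos : 0 < k) (htpos : 0 < t)
    (hkval : (k : ℝ) = 1 / Real.sqrt ε - c)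
    (htval : (t : ℝ) = Real.log ((1 - δ) * p) / Real.log (1 - (1 - δ) * p)) :
    ∃ n₀ : ℝ, ∀ n : ℝ, n > n₀ →
      (∑ i ∈ Finset.range k,
          (Real.log (Real.Gamma ((1 - δ) * p * (n * (1 - (i : ℝ) * Real.sqrt ε)) + 1)) -
            Real.log (Real.Gamma
              ((1 - δ) * p * (n * (1 - (i : ℝ) * Real.sqrt ε)) - Real.sqrt ε * n + 1)))) +
        (∑ i ∈ Finset.range t,
          Real.log (Real.Gamma
            ((1 - δ) * p * c * Real.sqrt ε * n * (1 - (1 - δ) * p) ^ i + 1))) ≥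
      (1 - 3 * Real.sqrt ε) * n * Real.log (p * n) := by
  set s := Real.sqrt ε with hs_def
  have hs : 0 < s := Real.sqrt_pos.mpr hε
  have hsp : s < p := by
    have : Real.sqrt ε < Real.sqrt (p ^ 2) := Real.sqrt_lt_sqrt hε.le hεp
    rwa [Real.sqrt_sq hp.le] at this
  have hp1' : p ≤ 1 := by nlinarith
  have hq' : (1 - δ) * p = p - s := by rw [hδ]; field_simp
  have hq'pos : 0 < p - s := by linarith
  have hq'lt1 : p - s < 1 := by linarith
  have hc' : c = 1 / (p - s) := by rw [hc, hq']
  have hcq' : c * (p - s) = 1 := by rw [hc']; field_simp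
  have hcpos : 0 < c := by rw [hc']; positivity
  set q : ℝ := 1 - (p - s) with hq_def
  have hqpos : 0 < q := by rw [hq_def]; linarith
  have hqlt1 : q < 1 := by rw [hq_def]; linarith
  have hlogq_neg : Real.log q < 0 := Real.log_neg hqpos hqlt1
  have htlogq : (t : ℝ) * Real.log q = Real.log (p - s) := by
    rw [htval, hq', hq_def]
    exact div_mul_cancel₀ _ (by rw [← hq_def]; exact hlogq_neg.ne)
  have hqt : q ^ t = p - s := by
    have h1 : Real.log (q ^ t) = Real.log (p - s) := by
      rw [Real.log_pow]; exact htlogq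
    have := Real.exp_log (pow_pos hqpos t)
    rw [h1, Real.exp_log hq'pos] at this
    exact this.symm
  have hks : (k : ℝ) * s = 1 - c * s := by
    rw [hkval, sub_mul, one_div, inv_mul_cancel₀ hs.ne']
  -- constants
  set S : ℝ := Real.log s + Real.log (p - s) with hS_def
  set A : ℝ := (1 - c * s) * S + s * (c - 1) * (S - 1) - (1 - 3 * s) * Real.log p with hA_def
  refine ⟨max (max 1 (q / (s * (p - s)))) (Real.exp (-A / (2 * s))), fun n hn => ?_⟩
  have hn1 : (1:ℝ) < n := lt_of_le_of_lt (le_max_of_le_left (le_max_left _ _)) hn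
  have hnpos : 0 < n := by linarith
  have hnq : q / (s * (p - s)) < n := lt_of_le_of_lt (le_max_of_le_left (le_max_right _ _)) hn
  have hnA : Real.exp (-A / (2 * s)) < n := lt_of_le_of_lt (le_max_right _ _) hn
  have hL : -A / (2 * s) < Real.log n := (Real.lt_log_iff_exp_lt hnpos).mpr hnA
  have hLA : 0 < 2 * s * Real.log n + A := by
    have h2s : (0:ℝ) < 2 * s := by linarith
    rw [div_lt_iff₀ h2s] at hL
    nlinarith
  rw [ge_iff_le, hq', ← hq_def]
  -- bound the first sum
  have sum1 : (k : ℝ) * (s * n * (S + Real.log n)) ≤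
      ∑ i ∈ Finset.range k,
          (Real.log (Real.Gamma ((p - s) * (n * (1 - (i : ℝ) * s)) + 1)) -
            Real.log (Real.Gamma ((p - s) * (n * (1 - (i : ℝ) * s)) - s * n + 1))) := by
    have hterm : ∀ i ∈ Finset.range k, s * n * (S + Real.log n) ≤
        (Real.log (Real.Gamma ((p - s) * (n * (1 - (i : ℝ) * s)) + 1)) -
          Real.log (Real.Gamma ((p - s) * (n * (1 - (i : ℝ) * s)) - s * n + 1))) := by
      intro i hi
      have hik : (i : ℝ) ≤ (k : ℝ) - 1 := by
        have h := Finset.mem_range.mp hi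
        have : (i : ℝ) + 1 ≤ (k : ℝ) := by exact_mod_cast h
        linarith
      set b : ℝ := (p - s) * (n * (1 - (i : ℝ) * s)) - s * n with hb_def
      have hbge : s * (p - s) * n ≤ b := by
        have h1 : c * s + s ≤ 1 - (i : ℝ) * s := by nlinarith
        have h2 : (p - s) * (n * (c * s + s)) ≤ (p - s) * (n * (1 - (i:ℝ) * s)) := by
          apply mul_le_mul_of_nonneg_left _ hq'pos.le
          exact mul_le_mul_of_nonneg_left h1 hnpos.le
        have h3 : (p - s) * (n * (c * s + s)) = n * s * ((p - s) * c) + n * s * (p - s) := by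
          ring
        rw [mul_comm c (p - s)] at hcq'
        rw [hcq'] at h3
        rw [mul_comm (p - s) c] at hcq'
        rw [hb_def]
        nlinarith
      have hbpos : 0 < b := lt_of_lt_of_le (by positivity) hbge
      have hba : b ≤ (p - s) * (n * (1 - (i : ℝ) * s)) := by
        rw [hb_def]; nlinarith
      have hslope := logGamma_slope ((p - s) * (n * (1 - (i : ℝ) * s))) b hbpos hba
      have hdiff : (p - s) * (n * (1 - (i : ℝ) * s)) - b = s * n := by rw [hb_def]; ring
      rw [hdiff] at hslope
      have hlogb : S + Real.log n ≤ Real.log b := by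
        have h := Real.log_le_log (show (0:ℝ) < s * (p - s) * n by positivity) hbge
        rw [Real.log_mul (by positivity) hnpos.ne', Real.log_mul hs.ne' hq'pos.ne'] at h
        rw [hS_def]; linarith
      calc s * n * (S + Real.log n) ≤ s * n * Real.log b :=
            mul_le_mul_of_nonneg_left hlogb (by positivity)
      _ ≤ _ := hslope
    calc (k : ℝ) * (s * n * (S + Real.log n))
        = ∑ _i ∈ Finset.range k, s * n * (S + Real.log n) := by
          rw [Finset.sum_const, Finset.card_range, nsmul_eq_mul]
      _ ≤ _ := Finset.sum_le_sum hterm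
  -- bound the second sum
  have hG : ∑ i ∈ Finset.range t, q ^ i = c - 1 := by
    rw [geom_sum_eq hqlt1.ne, hqt, hc', hq_def]
    have hden : (1 - (p - s)) - 1 ≠ 0 := by
      intro h; exact hq'pos.ne' (by linarith)
    rw [div_eq_iff hden]
    field_simp
    ring
  have sum2 : (c - 1) * (s * n * (S + Real.log n - 1)) ≤
      ∑ i ∈ Finset.range t,
        Real.log (Real.Gamma ((p - s) * c * s * n * q ^ i + 1)) := by
    have hterm : ∀ i ∈ Finset.range t, (s * n * (S + Real.log n - 1)) * q ^ i ≤
        Real.log (Real.Gamma ((p - s) * c * s * n * q ^ i + 1)) := by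
      intro i hi
      have hit : i ≤ t - 1 := Nat.le_sub_one_of_lt (Finset.mem_range.mp hi)
      have hit' : (i : ℝ) ≤ (t : ℝ) := by
        exact_mod_cast (Finset.mem_range.mp hi).le
      have hx_eq : (p - s) * c * s * n * q ^ i = s * n * q ^ i := by
        rw [mul_comm (p - s) c, hcq', one_mul]
      have hqi_ge : q ^ (t - 1) ≤ q ^ i := pow_le_pow_of_le_one hqpos.le hqlt1.le hit
      have hqt1 : q ^ (t - 1) = (p - s) / q := by
        have h : q ^ (t - 1) * q = p - s := by
          rw [← pow_succ, Nat.sub_add_cancel htpos, hqt]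
        rw [eq_div_iff hqpos.ne']; exact h
      have hx1 : 1 ≤ s * n * q ^ i := by
        have h3 : q < n * (s * (p - s)) := (div_lt_iff₀ (by positivity)).mp hnq
        calc (1:ℝ) ≤ s * n * (p - s) / q := by
              rw [le_div_iff₀ hqpos]; nlinarith
        _ = s * n * ((p - s) / q) := by ring
        _ = s * n * q ^ (t - 1) := by rw [hqt1]
        _ ≤ s * n * q ^ i := mul_le_mul_of_nonneg_left hqi_ge (by positivity)
      have hstir := logGamma_stirling hx1
      have hlogx : Real.log (s * n * q ^ i)
          = Real.log s + Real.log n + (i : ℝ) * Real.log q := by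
        rw [Real.log_mul (by positivity) (by positivity),
          Real.log_mul hs.ne' hnpos.ne', Real.log_pow]
      have hilq : Real.log (p - s) ≤ (i : ℝ) * Real.log q := by
        rw [← htlogq]
        exact mul_le_mul_of_nonpos_right hit' hlogq_neg.le
      have hfinal : (s * n * (S + Real.log n - 1)) * q ^ i
          ≤ (s * n * q ^ i) * Real.log (s * n * q ^ i) - (s * n * q ^ i) := by
        rw [hlogx]
        have heq : (s * n * q ^ i) * (Real.log s + Real.log n + (i:ℝ) * Real.log q)
            - (s * n * q ^ i)
            = (s * n * (Real.log s + Real.log n + (i:ℝ) * Real.log q - 1)) * q ^ i := by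
          ring
        rw [heq]
        apply mul_le_mul_of_nonneg_right _ (by positivity)
        apply mul_le_mul_of_nonneg_left _ (by positivity)
        rw [hS_def]
        linarith
      rw [hx_eq]
      linarith
    calc (c - 1) * (s * n * (S + Real.log n - 1))
        = ∑ i ∈ Finset.range t, (s * n * (S + Real.log n - 1)) * q ^ i := by
          rw [← Finset.mul_sum, hG]; ring
      _ ≤ _ := Finset.sum_le_sum hterm
  -- combine
  have hlogpn : Real.log (p * n) = Real.log p + Real.log n :=
    Real.log_mul hp.ne' hnpos.ne'
  have hkterm : (k : ℝ) * (s * n * (S + Real.log n))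
      = (1 - c * s) * (n * (S + Real.log n)) := by
    have h : (k : ℝ) * (s * n * (S + Real.log n))
        = ((k:ℝ) * s) * (n * (S + Real.log n)) := by ring
    rw [h, hks]
  have hkey : (1 - 3 * s) * n * Real.log (p * n) ≤
      (k : ℝ) * (s * n * (S + Real.log n)) + (c - 1) * (s * n * (S + Real.log n - 1)) := by
    rw [hkterm, hlogpn]
    have hexpand : (1 - c * s) * (n * (S + Real.log n))
        + (c - 1) * (s * n * (S + Real.log n - 1))
        - (1 - 3 * s) * n * (Real.log p + Real.log n)
        = n * (2 * s * Real.log n + A) := by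
      rw [hA_def]; ring
    nlinarith [mul_pos hnpos hLA]
  calc (1 - 3 * s) * n * Real.log (p * n) ≤ _ := hkey
    _ ≤ _ := add_le_add sum1 sum2
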